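/- Fix g ≥ 1 and indices i, j, k, l, m, n ∈ {1,…,g}. There exists a universal polynomial P in the partial derivatives of σ of order at most 3 such that for every infinitely complex-differentiable σ : ℂ^g → ℂ and every u with σ(u) ≠ 0, σ(u)⁴ · [℘_{ij}℘_{kl}℘_{mn} − (1/8)(℘_{ijk}℘_{lmn} + ℘_{ijl}℘_{kmn} + ℘_{ijm}℘_{kln} + ℘_{ijn}℘_{klm} + ℘_{ikl}℘_{jmn} − ℘_{ikm}℘_{jln} − ℘_{ikn}℘_{jlm} − ℘_{ilm}℘_{jkn} − ℘_{iln}℘_{jkm} + ℘_{imn}℘_{jkl})](u) = P evaluated at the partial derivatives of σ at u. In particular this six-index combination has poles of order at most four along the zero set of σ, although its individual terms have poles of order six. -/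

import Mathlib

noncomputable section

/-- Partial derivative in the `i`-th coordinate direction. -/
def pd {g : ℕ} (i : Fin g) (f : (Fin g → ℂ) → ℂ) : (Fin g → ℂ) → ℂ :=
  fun u => fderiv ℂ f u (Pi.single i 1)

/-- Iterated partial derivative along a list of coordinate indices. -/
def pdIter {g : ℕ} (l : List (Fin g)) (f : (Fin g → ℂ) → ℂ) : (Fin g → ℂ) → ℂ :=
  l.foldl (fun h i => pd i h) f

/-- The 2-index Kleinian ℘-function ℘_{ij} = (σ_i σ_j − σ σ_{ij}) / σ². -/
def wp2 {g : ℕ} (σ : (Fin g → ℂ) → ℂ) (i j : Fin g) : (Fin g → ℂ) → ℂ :=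
  fun u => (pd i σ u * pd j σ u - σ u * pd j (pd i σ) u) / σ u ^ 2

/-- The m-index Kleinian ℘-function ℘_{i j k₁ ⋯ k_r}, obtained from ℘_{ij} by
successively differentiating with respect to the coordinates in `ks`. -/
def wp {g : ℕ} (σ : (Fin g → ℂ) → ℂ) (i j : Fin g) (ks : List (Fin g)) :
    (Fin g → ℂ) → ℂ :=
  ks.foldl (fun h k => pd k h) (wp2 σ i j)

/-- Variable of the universal polynomial ring indexed by a short list of indices. -/
def Xv {g : ℕ} (l : List (Fin g)) (h : l.length ≤ 3 := by norm_num) :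
    MvPolynomial {α : List (Fin g) // α.length ≤ 3} ℚ :=
  MvPolynomial.X ⟨l, h⟩

set_option maxHeartbeats 2000000 in
/-- The universal polynomial for statement 11. -/
def bigP {g : ℕ} (i j k l m n : Fin g) :
    MvPolynomial {α : List (Fin g) // α.length ≤ 3} ℚ :=
  MvPolynomial.C ((-1 : ℚ)/4) * (Xv [i]) * (Xv [j]) * (Xv [k]) * (Xv [l, m, n])
      + MvPolynomial.C ((3 : ℚ)/4) * (Xv [i]) * (Xv [j]) * (Xv [k, l]) * (Xv [m, n])
      + MvPolynomial.C ((-1 : ℚ)/4) * (Xv [i]) * (Xv [j]) * (Xv [k, l, m]) * (Xv [n])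
      + MvPolynomial.C ((-1 : ℚ)/4) * (Xv [i]) * (Xv [j]) * (Xv [k, l, n]) * (Xv [m])
      + MvPolynomial.C ((1 : ℚ)/4) * (Xv [i]) * (Xv [j]) * (Xv [k, m]) * (Xv [l, n])
      + MvPolynomial.C ((-1 : ℚ)/4) * (Xv [i]) * (Xv [j]) * (Xv [k, m, n]) * (Xv [l])
      + MvPolynomial.C ((1 : ℚ)/4) * (Xv [i]) * (Xv [j]) * (Xv [k, n]) * (Xv [l, m])
      + MvPolynomial.C ((-1 : ℚ)/4) * (Xv [i]) * (Xv [j, k]) * (Xv [l]) * (Xv [m, n])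
      + MvPolynomial.C ((1 : ℚ)/8) * (Xv [i]) * (Xv [j, k]) * (Xv [l, m, n]) * (Xv [])
      + MvPolynomial.C ((-1 : ℚ)/4) * (Xv [i]) * (Xv [j, k, l]) * (Xv [m]) * (Xv [n])
      + MvPolynomial.C ((1 : ℚ)/8) * (Xv [i]) * (Xv [j, k, l]) * (Xv [m, n]) * (Xv [])
      + MvPolynomial.C ((1 : ℚ)/4) * (Xv [i]) * (Xv [j, k, m]) * (Xv [l]) * (Xv [n])
      + MvPolynomial.C ((-1 : ℚ)/8) * (Xv [i]) * (Xv [j, k, m]) * (Xv [l, n]) * (Xv [])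
      + MvPolynomial.C ((1 : ℚ)/4) * (Xv [i]) * (Xv [j, k, n]) * (Xv [l]) * (Xv [m])
      + MvPolynomial.C ((-1 : ℚ)/8) * (Xv [i]) * (Xv [j, k, n]) * (Xv [l, m]) * (Xv [])
      + MvPolynomial.C ((-1 : ℚ)/4) * (Xv [i]) * (Xv [j, l]) * (Xv [k]) * (Xv [m, n])
      + MvPolynomial.C ((1 : ℚ)/8) * (Xv [i]) * (Xv [j, l]) * (Xv [k, m, n]) * (Xv [])
      + MvPolynomial.C ((1 : ℚ)/4) * (Xv [i]) * (Xv [j, l, m]) * (Xv [k]) * (Xv [n])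
      + MvPolynomial.C ((-1 : ℚ)/8) * (Xv [i]) * (Xv [j, l, m]) * (Xv [k, n]) * (Xv [])
      + MvPolynomial.C ((1 : ℚ)/4) * (Xv [i]) * (Xv [j, l, n]) * (Xv [k]) * (Xv [m])
      + MvPolynomial.C ((-1 : ℚ)/8) * (Xv [i]) * (Xv [j, l, n]) * (Xv [k, m]) * (Xv [])
      + MvPolynomial.C ((-1 : ℚ)/4) * (Xv [i]) * (Xv [j, m]) * (Xv [k, l]) * (Xv [n])
      + MvPolynomial.C ((1 : ℚ)/8) * (Xv [i]) * (Xv [j, m]) * (Xv [k, l, n]) * (Xv [])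
      + MvPolynomial.C ((-1 : ℚ)/4) * (Xv [i]) * (Xv [j, m, n]) * (Xv [k]) * (Xv [l])
      + MvPolynomial.C ((1 : ℚ)/8) * (Xv [i]) * (Xv [j, m, n]) * (Xv [k, l]) * (Xv [])
      + MvPolynomial.C ((-1 : ℚ)/4) * (Xv [i]) * (Xv [j, n]) * (Xv [k, l]) * (Xv [m])
      + MvPolynomial.C ((1 : ℚ)/8) * (Xv [i]) * (Xv [j, n]) * (Xv [k, l, m]) * (Xv [])
      + MvPolynomial.C ((3 : ℚ)/4) * (Xv [i, j]) * (Xv [k]) * (Xv [l]) * (Xv [m, n])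
      + MvPolynomial.C ((-1 : ℚ)/4) * (Xv [i, j]) * (Xv [k]) * (Xv [l, m]) * (Xv [n])
      + MvPolynomial.C ((1 : ℚ)/8) * (Xv [i, j]) * (Xv [k]) * (Xv [l, m, n]) * (Xv [])
      + MvPolynomial.C ((-1 : ℚ)/4) * (Xv [i, j]) * (Xv [k]) * (Xv [l, n]) * (Xv [m])
      + MvPolynomial.C ((3 : ℚ)/4) * (Xv [i, j]) * (Xv [k, l]) * (Xv [m]) * (Xv [n])
      + MvPolynomial.C (-1 : ℚ) * (Xv [i, j]) * (Xv [k, l]) * (Xv [m, n]) * (Xv [])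
      + MvPolynomial.C ((1 : ℚ)/8) * (Xv [i, j]) * (Xv [k, l, m]) * (Xv [n]) * (Xv [])
      + MvPolynomial.C ((1 : ℚ)/8) * (Xv [i, j]) * (Xv [k, l, n]) * (Xv [m]) * (Xv [])
      + MvPolynomial.C ((-1 : ℚ)/4) * (Xv [i, j]) * (Xv [k, m]) * (Xv [l]) * (Xv [n])
      + MvPolynomial.C ((1 : ℚ)/8) * (Xv [i, j]) * (Xv [k, m, n]) * (Xv [l]) * (Xv [])
      + MvPolynomial.C ((-1 : ℚ)/4) * (Xv [i, j]) * (Xv [k, n]) * (Xv [l]) * (Xv [m])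
      + MvPolynomial.C ((-1 : ℚ)/4) * (Xv [i, j, k]) * (Xv [l]) * (Xv [m]) * (Xv [n])
      + MvPolynomial.C ((1 : ℚ)/8) * (Xv [i, j, k]) * (Xv [l]) * (Xv [m, n]) * (Xv [])
      + MvPolynomial.C ((1 : ℚ)/8) * (Xv [i, j, k]) * (Xv [l, m]) * (Xv [n]) * (Xv [])
      + MvPolynomial.C ((-1 : ℚ)/8) * (Xv [i, j, k]) * (Xv [l, m, n]) * (Xv []) ^ 2
      + MvPolynomial.C ((1 : ℚ)/8) * (Xv [i, j, k]) * (Xv [l, n]) * (Xv [m]) * (Xv [])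
      + MvPolynomial.C ((-1 : ℚ)/4) * (Xv [i, j, l]) * (Xv [k]) * (Xv [m]) * (Xv [n])
      + MvPolynomial.C ((1 : ℚ)/8) * (Xv [i, j, l]) * (Xv [k]) * (Xv [m, n]) * (Xv [])
      + MvPolynomial.C ((1 : ℚ)/8) * (Xv [i, j, l]) * (Xv [k, m]) * (Xv [n]) * (Xv [])
      + MvPolynomial.C ((-1 : ℚ)/8) * (Xv [i, j, l]) * (Xv [k, m, n]) * (Xv []) ^ 2
      + MvPolynomial.C ((1 : ℚ)/8) * (Xv [i, j, l]) * (Xv [k, n]) * (Xv [m]) * (Xv [])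
      + MvPolynomial.C ((-1 : ℚ)/4) * (Xv [i, j, m]) * (Xv [k]) * (Xv [l]) * (Xv [n])
      + MvPolynomial.C ((1 : ℚ)/8) * (Xv [i, j, m]) * (Xv [k]) * (Xv [l, n]) * (Xv [])
      + MvPolynomial.C ((1 : ℚ)/8) * (Xv [i, j, m]) * (Xv [k, l]) * (Xv [n]) * (Xv [])
      + MvPolynomial.C ((-1 : ℚ)/8) * (Xv [i, j, m]) * (Xv [k, l, n]) * (Xv []) ^ 2
      + MvPolynomial.C ((1 : ℚ)/8) * (Xv [i, j, m]) * (Xv [k, n]) * (Xv [l]) * (Xv [])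
      + MvPolynomial.C ((-1 : ℚ)/4) * (Xv [i, j, n]) * (Xv [k]) * (Xv [l]) * (Xv [m])
      + MvPolynomial.C ((1 : ℚ)/8) * (Xv [i, j, n]) * (Xv [k]) * (Xv [l, m]) * (Xv [])
      + MvPolynomial.C ((1 : ℚ)/8) * (Xv [i, j, n]) * (Xv [k, l]) * (Xv [m]) * (Xv [])
      + MvPolynomial.C ((-1 : ℚ)/8) * (Xv [i, j, n]) * (Xv [k, l, m]) * (Xv []) ^ 2
      + MvPolynomial.C ((1 : ℚ)/8) * (Xv [i, j, n]) * (Xv [k, m]) * (Xv [l]) * (Xv [])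
      + MvPolynomial.C ((-1 : ℚ)/4) * (Xv [i, k]) * (Xv [j]) * (Xv [l]) * (Xv [m, n])
      + MvPolynomial.C ((1 : ℚ)/8) * (Xv [i, k]) * (Xv [j]) * (Xv [l, m, n]) * (Xv [])
      + MvPolynomial.C ((1 : ℚ)/4) * (Xv [i, k]) * (Xv [j, l]) * (Xv [m]) * (Xv [n])
      + MvPolynomial.C ((-1 : ℚ)/8) * (Xv [i, k]) * (Xv [j, l, m]) * (Xv [n]) * (Xv [])
      + MvPolynomial.C ((-1 : ℚ)/8) * (Xv [i, k]) * (Xv [j, l, n]) * (Xv [m]) * (Xv [])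
      + MvPolynomial.C ((1 : ℚ)/8) * (Xv [i, k]) * (Xv [j, m, n]) * (Xv [l]) * (Xv [])
      + MvPolynomial.C ((-1 : ℚ)/4) * (Xv [i, k, l]) * (Xv [j]) * (Xv [m]) * (Xv [n])
      + MvPolynomial.C ((1 : ℚ)/8) * (Xv [i, k, l]) * (Xv [j]) * (Xv [m, n]) * (Xv [])
      + MvPolynomial.C ((1 : ℚ)/8) * (Xv [i, k, l]) * (Xv [j, m]) * (Xv [n]) * (Xv [])
      + MvPolynomial.C ((-1 : ℚ)/8) * (Xv [i, k, l]) * (Xv [j, m, n]) * (Xv []) ^ 2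
      + MvPolynomial.C ((1 : ℚ)/8) * (Xv [i, k, l]) * (Xv [j, n]) * (Xv [m]) * (Xv [])
      + MvPolynomial.C ((1 : ℚ)/4) * (Xv [i, k, m]) * (Xv [j]) * (Xv [l]) * (Xv [n])
      + MvPolynomial.C ((-1 : ℚ)/8) * (Xv [i, k, m]) * (Xv [j]) * (Xv [l, n]) * (Xv [])
      + MvPolynomial.C ((-1 : ℚ)/8) * (Xv [i, k, m]) * (Xv [j, l]) * (Xv [n]) * (Xv [])
      + MvPolynomial.C ((1 : ℚ)/8) * (Xv [i, k, m]) * (Xv [j, l, n]) * (Xv []) ^ 2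
      + MvPolynomial.C ((-1 : ℚ)/8) * (Xv [i, k, m]) * (Xv [j, n]) * (Xv [l]) * (Xv [])
      + MvPolynomial.C ((1 : ℚ)/4) * (Xv [i, k, n]) * (Xv [j]) * (Xv [l]) * (Xv [m])
      + MvPolynomial.C ((-1 : ℚ)/8) * (Xv [i, k, n]) * (Xv [j]) * (Xv [l, m]) * (Xv [])
      + MvPolynomial.C ((-1 : ℚ)/8) * (Xv [i, k, n]) * (Xv [j, l]) * (Xv [m]) * (Xv [])
      + MvPolynomial.C ((1 : ℚ)/8) * (Xv [i, k, n]) * (Xv [j, l, m]) * (Xv []) ^ 2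
      + MvPolynomial.C ((-1 : ℚ)/8) * (Xv [i, k, n]) * (Xv [j, m]) * (Xv [l]) * (Xv [])
      + MvPolynomial.C ((-1 : ℚ)/4) * (Xv [i, l]) * (Xv [j]) * (Xv [k]) * (Xv [m, n])
      + MvPolynomial.C ((1 : ℚ)/8) * (Xv [i, l]) * (Xv [j]) * (Xv [k, m, n]) * (Xv [])
      + MvPolynomial.C ((1 : ℚ)/4) * (Xv [i, l]) * (Xv [j, k]) * (Xv [m]) * (Xv [n])
      + MvPolynomial.C ((-1 : ℚ)/8) * (Xv [i, l]) * (Xv [j, k, m]) * (Xv [n]) * (Xv [])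
      + MvPolynomial.C ((-1 : ℚ)/8) * (Xv [i, l]) * (Xv [j, k, n]) * (Xv [m]) * (Xv [])
      + MvPolynomial.C ((1 : ℚ)/8) * (Xv [i, l]) * (Xv [j, m, n]) * (Xv [k]) * (Xv [])
      + MvPolynomial.C ((1 : ℚ)/4) * (Xv [i, l, m]) * (Xv [j]) * (Xv [k]) * (Xv [n])
      + MvPolynomial.C ((-1 : ℚ)/8) * (Xv [i, l, m]) * (Xv [j]) * (Xv [k, n]) * (Xv [])
      + MvPolynomial.C ((-1 : ℚ)/8) * (Xv [i, l, m]) * (Xv [j, k]) * (Xv [n]) * (Xv [])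
      + MvPolynomial.C ((1 : ℚ)/8) * (Xv [i, l, m]) * (Xv [j, k, n]) * (Xv []) ^ 2
      + MvPolynomial.C ((-1 : ℚ)/8) * (Xv [i, l, m]) * (Xv [j, n]) * (Xv [k]) * (Xv [])
      + MvPolynomial.C ((1 : ℚ)/4) * (Xv [i, l, n]) * (Xv [j]) * (Xv [k]) * (Xv [m])
      + MvPolynomial.C ((-1 : ℚ)/8) * (Xv [i, l, n]) * (Xv [j]) * (Xv [k, m]) * (Xv [])
      + MvPolynomial.C ((-1 : ℚ)/8) * (Xv [i, l, n]) * (Xv [j, k]) * (Xv [m]) * (Xv [])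
      + MvPolynomial.C ((1 : ℚ)/8) * (Xv [i, l, n]) * (Xv [j, k, m]) * (Xv []) ^ 2
      + MvPolynomial.C ((-1 : ℚ)/8) * (Xv [i, l, n]) * (Xv [j, m]) * (Xv [k]) * (Xv [])
      + MvPolynomial.C ((-1 : ℚ)/4) * (Xv [i, m]) * (Xv [j]) * (Xv [k, l]) * (Xv [n])
      + MvPolynomial.C ((1 : ℚ)/8) * (Xv [i, m]) * (Xv [j]) * (Xv [k, l, n]) * (Xv [])
      + MvPolynomial.C ((1 : ℚ)/8) * (Xv [i, m]) * (Xv [j, k, l]) * (Xv [n]) * (Xv [])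
      + MvPolynomial.C ((-1 : ℚ)/8) * (Xv [i, m]) * (Xv [j, k, n]) * (Xv [l]) * (Xv [])
      + MvPolynomial.C ((-1 : ℚ)/8) * (Xv [i, m]) * (Xv [j, l, n]) * (Xv [k]) * (Xv [])
      + MvPolynomial.C ((1 : ℚ)/4) * (Xv [i, m]) * (Xv [j, n]) * (Xv [k]) * (Xv [l])
      + MvPolynomial.C ((-1 : ℚ)/4) * (Xv [i, m, n]) * (Xv [j]) * (Xv [k]) * (Xv [l])
      + MvPolynomial.C ((1 : ℚ)/8) * (Xv [i, m, n]) * (Xv [j]) * (Xv [k, l]) * (Xv [])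
      + MvPolynomial.C ((1 : ℚ)/8) * (Xv [i, m, n]) * (Xv [j, k]) * (Xv [l]) * (Xv [])
      + MvPolynomial.C ((-1 : ℚ)/8) * (Xv [i, m, n]) * (Xv [j, k, l]) * (Xv []) ^ 2
      + MvPolynomial.C ((1 : ℚ)/8) * (Xv [i, m, n]) * (Xv [j, l]) * (Xv [k]) * (Xv [])
      + MvPolynomial.C ((-1 : ℚ)/4) * (Xv [i, n]) * (Xv [j]) * (Xv [k, l]) * (Xv [m])
      + MvPolynomial.C ((1 : ℚ)/8) * (Xv [i, n]) * (Xv [j]) * (Xv [k, l, m]) * (Xv [])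
      + MvPolynomial.C ((1 : ℚ)/8) * (Xv [i, n]) * (Xv [j, k, l]) * (Xv [m]) * (Xv [])
      + MvPolynomial.C ((-1 : ℚ)/8) * (Xv [i, n]) * (Xv [j, k, m]) * (Xv [l]) * (Xv [])
      + MvPolynomial.C ((-1 : ℚ)/8) * (Xv [i, n]) * (Xv [j, l, m]) * (Xv [k]) * (Xv [])
      + MvPolynomial.C ((1 : ℚ)/4) * (Xv [i, n]) * (Xv [j, m]) * (Xv [k]) * (Xv [l])

section Lemmas

variable {g : ℕ} {f h σ : (Fin g → ℂ) → ℂ} {u : Fin g → ℂ} {c : Fin g}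

lemma contDiff_pd (hσ : ContDiff ℂ ⊤ σ) (a : Fin g) : ContDiff ℂ ⊤ (pd a σ) :=
  (hσ.fderiv_right le_top).clm_apply contDiff_const

lemma pd_sub (hf : DifferentiableAt ℂ f u) (hh : DifferentiableAt ℂ h u) :
    pd c (fun x => f x - h x) u = pd c f u - pd c h u := by
  simp [pd, fderiv_fun_sub hf hh]

lemma pd_mul (hf : DifferentiableAt ℂ f u) (hh : DifferentiableAt ℂ h u) :
    pd c (fun x => f x * h x) u = f u * pd c h u + pd c f u * h u := by
  simp [pd, fderiv_fun_mul hf hh, mul_comm]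

lemma pd_inv (hf : DifferentiableAt ℂ f u) (hz : f u ≠ 0) :
    pd c (fun x => (f x)⁻¹) u = -pd c f u / f u ^ 2 := by
  have H := ((hasFDerivAt_inv' (𝕜 := ℂ) hz).comp u hf.hasFDerivAt).fderiv
  simp only [pd]
  rw [show (fun x => (f x)⁻¹) = Inv.inv ∘ f from rfl, H]
  simp only [ContinuousLinearMap.comp_apply, ContinuousLinearMap.neg_apply,
    ContinuousLinearMap.mulLeftRight_apply]
  field_simp

lemma pd_div (hf : DifferentiableAt ℂ f u) (hh : DifferentiableAt ℂ h u) (hz : h u ≠ 0) :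
    pd c (fun x => f x / h x) u = (pd c f u * h u - f u * pd c h u) / h u ^ 2 := by
  have e : (fun x => f x / h x) = fun x => f x * (h x)⁻¹ := by
    funext x; rw [div_eq_mul_inv]
  rw [e, pd_mul (h := fun x => (h x)⁻¹) hf (hh.inv hz), pd_inv hh hz]
  field_simp
  ring

lemma pd_sq (hf : DifferentiableAt ℂ f u) :
    pd c (fun x => f x ^ 2) u = 2 * f u * pd c f u := by
  have e : (fun x => f x ^ 2) = fun x => f x * f x := by funext x; ring
  rw [e, pd_mul hf hf]; ring

/-- The key derivative computation: the third ℘-function as an explicit rational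
expression in the partial derivatives of σ. -/
lemma pd_wp2 (hσ : ContDiff ℂ ⊤ σ) (a b : Fin g) (hu : σ u ≠ 0) :
    pd c (wp2 σ a b) u =
      ((pd c (pd a σ) u * pd b σ u + pd a σ u * pd c (pd b σ) u
          - pd c σ u * pd b (pd a σ) u - σ u * pd c (pd b (pd a σ)) u) * σ u
        - 2 * pd c σ u * (pd a σ u * pd b σ u - σ u * pd b (pd a σ) u)) / σ u ^ 3 := by
  have hs : DifferentiableAt ℂ σ u := (hσ.differentiable (by simp)).differentiableAt
  have ha : DifferentiableAt ℂ (pd a σ) u :=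
    ((contDiff_pd hσ a).differentiable (by simp)).differentiableAt
  have hb : DifferentiableAt ℂ (pd b σ) u :=
    ((contDiff_pd hσ b).differentiable (by simp)).differentiableAt
  have hab : DifferentiableAt ℂ (pd b (pd a σ)) u :=
    ((contDiff_pd (contDiff_pd hσ a) b).differentiable (by simp)).differentiableAt
  have e : wp2 σ a b =
      fun x => (pd a σ x * pd b σ x - σ x * pd b (pd a σ) x) / σ x ^ 2 := rfl
  rw [e, pd_div (f := fun x => pd a σ x * pd b σ x - σ x * pd b (pd a σ) x)
      (h := fun x => σ x ^ 2) ((ha.mul hb).sub (hs.mul hab)) (hs.pow 2) (pow_ne_zero 2 hu),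
    pd_sub (f := fun x => pd a σ x * pd b σ x) (h := fun x => σ x * pd b (pd a σ) x)
      (ha.mul hb) (hs.mul hab), pd_mul ha hb, pd_mul hs hab, pd_sq hs]
  field_simp
  ring

lemma master (s a b c y1 z1 y2 z2 y3 z3 y4 z4 y5 z5 y6 z6 y7 z7 y8 z8 y9 z9 y10 z10 : ℂ)
    (hs : s ≠ 0) :
    s ^ 4 * (a / s ^ 2 * (b / s ^ 2) * (c / s ^ 2)
        - 1 / 8 * (y1 / s ^ 3 * (z1 / s ^ 3) + y2 / s ^ 3 * (z2 / s ^ 3)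
          + y3 / s ^ 3 * (z3 / s ^ 3) + y4 / s ^ 3 * (z4 / s ^ 3)
          + y5 / s ^ 3 * (z5 / s ^ 3) - y6 / s ^ 3 * (z6 / s ^ 3)
          - y7 / s ^ 3 * (z7 / s ^ 3) - y8 / s ^ 3 * (z8 / s ^ 3)
          - y9 / s ^ 3 * (z9 / s ^ 3) + y10 / s ^ 3 * (z10 / s ^ 3)))
      = (a * b * c - 1 / 8 * (y1 * z1 + y2 * z2 + y3 * z3 + y4 * z4 + y5 * z5
          - y6 * z6 - y7 * z7 - y8 * z8 - y9 * z9 + y10 * z10)) / s ^ 2 := by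
  have h2 : s ^ 2 ≠ 0 := pow_ne_zero _ hs
  have h6 : s ^ 6 ≠ 0 := pow_ne_zero _ hs
  have e3 : ∀ x y : ℂ, x / s ^ 3 * (y / s ^ 3) = x * y / s ^ 6 := fun x y => by
    rw [div_mul_div_comm, ← pow_add]
  have e2 : a / s ^ 2 * (b / s ^ 2) * (c / s ^ 2) = a * b * c / s ^ 6 := by
    rw [div_mul_div_comm, div_mul_div_comm, ← pow_add, ← pow_add]
  rw [e2, e3, e3, e3, e3, e3, e3, e3, e3, e3, e3, ← add_div, ← add_div,
    ← add_div, ← add_div, div_sub_div_same, div_sub_div_same,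
    div_sub_div_same, div_sub_div_same, ← add_div, ← mul_div_assoc,
    div_sub_div_same, ← mul_div_assoc, div_mul_eq_mul_div, div_eq_div_iff h6 h2]
  ring

end Lemmas

set_option maxHeartbeats 4000000 in
/-- there is a universal polynomial P in the partial derivatives of σ of
order at most 3 such that σ⁴ times the stated six-index combination equals P(∂^α σ);
in particular that combination has poles of order at most four. -/
theorem statement11 {g : ℕ} (hg : 1 ≤ g) (i j k l m n : Fin g) :
    ∃ P : MvPolynomial {α : List (Fin g) // α.length ≤ 3} ℚ,
      ∀ σ : (Fin g → ℂ) → ℂ, ContDiff ℂ ⊤ σ → ∀ u : Fin g → ℂ, σ u ≠ 0 →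
        σ u ^ 4 * (wp2 σ i j u * wp2 σ k l u * wp2 σ m n u
            - (1 / 8) *
              (wp σ i j [k] u * wp σ l m [n] u + wp σ i j [l] u * wp σ k m [n] u
                + wp σ i j [m] u * wp σ k l [n] u + wp σ i j [n] u * wp σ k l [m] u
                + wp σ i k [l] u * wp σ j m [n] u - wp σ i k [m] u * wp σ j l [n] u
                - wp σ i k [n] u * wp σ j l [m] u - wp σ i l [m] u * wp σ j k [n] u
                - wp σ i l [n] u * wp σ j k [m] u + wp σ i m [n] u * wp σ j k [l] u))
          = MvPolynomial.aeval (fun v : {α : List (Fin g) // α.length ≤ 3} =>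
              pdIter v.1 σ u) P := by
  refine ⟨bigP i j k l m n, ?_⟩
  intro σ hσ u hu
  have hw : ∀ a b c' : Fin g, wp σ a b [c'] u = pd c' (wp2 σ a b) u := fun _ _ _ => rfl
  simp only [hw]
  simp only [pd_wp2 hσ i j hu, pd_wp2 hσ l m hu, pd_wp2 hσ k m hu, pd_wp2 hσ k l hu,
    pd_wp2 hσ i k hu, pd_wp2 hσ j m hu, pd_wp2 hσ j l hu, pd_wp2 hσ i l hu,
    pd_wp2 hσ j k hu, pd_wp2 hσ i m hu]
  simp only [wp2]
  rw [master _ _ _ _ _ _ _ _ _ _ _ _ _ _ _ _ _ _ _ _ _ _ _ _ hu,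
    div_eq_iff (pow_ne_zero 2 hu)]
  simp only [bigP, Xv, map_add, map_mul, map_pow, MvPolynomial.aeval_X,
    MvPolynomial.aeval_C, pdIter, List.foldl, eq_ratCast]
  push_cast
  ring

end
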